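/- Let N ≥ 1 be an integer, σ ∈ (0,2), and let g : ℝ^N → ℝ be a bounded measurable function. Then there exists a constant C > 0, depending only on N and σ, such that for every x ∈ ℝ^N, every R > 0 and every y > 0, the integral ∫_{{ξ : |ξ−x| ≥ R}} (g(ξ) − g(x)) (K_y(x,ξ) − K_0(x,ξ)) dξ is absolutely convergent and its absolute value is at most C · (sup |g|) · y² / R^{σ+2}. -/

import Mathlib

open MeasureTheory Filter Set Metric



lemma keyA {p r y : ℝ} (hp : 0 < p) (hr : 0 < r) (hy : 0 ≤ y) :
    |(r ^ 2 + y ^ 2) ^ (-p / 2) - r ^ (-p)| ≤ p / 2 * y ^ 2 * r ^ (-(p + 2)) := by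
  have hq0 : 0 < p / 2 := by positivity
  have ha0 : (0:ℝ) < r ^ 2 := by positivity
  have hab : r ^ 2 ≤ r ^ 2 + y ^ 2 := by nlinarith
  have hd : ∀ t ∈ Icc (r ^ 2) (r ^ 2 + y ^ 2), HasDerivWithinAt (fun t : ℝ => t ^ (-(p/2)))
      ((-(p/2)) * t ^ (-(p/2) - 1)) (Icc (r ^ 2) (r ^ 2 + y ^ 2)) t := fun t ht =>
    (Real.hasDerivAt_rpow_const (Or.inl (lt_of_lt_of_le ha0 ht.1).ne')).hasDerivWithinAt
  have hbound : ∀ t ∈ Ico (r ^ 2) (r ^ 2 + y ^ 2),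
      ‖(-(p/2)) * t ^ (-(p/2) - 1)‖ ≤ p / 2 * (r ^ 2) ^ (-(p/2) - 1) := by
    intro t ht
    have ht0 : 0 < t := lt_of_lt_of_le ha0 ht.1
    rw [norm_mul, norm_neg, Real.norm_eq_abs, Real.norm_eq_abs, abs_of_pos hq0,
      abs_of_pos (Real.rpow_pos_of_pos ht0 _)]
    exact mul_le_mul_of_nonneg_left
      (Real.rpow_le_rpow_of_nonpos ha0 ht.1 (by linarith)) hq0.le
  have key := norm_image_sub_le_of_norm_deriv_le_segment' hd hbound (r ^ 2 + y ^ 2)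
    (right_mem_Icc.2 hab)
  rw [Real.norm_eq_abs] at key
  have e1 : (r ^ 2 : ℝ) ^ (-(p/2)) = r ^ (-p) := by
    rw [← Real.rpow_natCast r 2, ← Real.rpow_mul hr.le]
    congr 1
    push_cast
    ring
  have e2 : (r ^ 2 : ℝ) ^ (-(p/2) - 1) = r ^ (-(p + 2)) := by
    rw [← Real.rpow_natCast r 2, ← Real.rpow_mul hr.le]
    congr 1
    push_cast
    ring
  have egoal : -p / 2 = -(p/2) := by ring
  rw [egoal]
  calc |(r ^ 2 + y ^ 2) ^ (-(p/2)) - r ^ (-p)|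
      ≤ p / 2 * (r ^ 2) ^ (-(p/2) - 1) * (r ^ 2 + y ^ 2 - r ^ 2) := by
        simpa [e1] using key
    _ = p / 2 * y ^ 2 * r ^ (-(p + 2)) := by rw [e2]; ring


lemma keyB (N : ℕ) (hN : 1 ≤ N) (x : EuclideanSpace ℝ (Fin N)) {R s : ℝ}
    (hR : 0 < R) (hs : (N : ℝ) + s < 0) :
    ∫ ξ in {ξ : EuclideanSpace ℝ (Fin N) | R ≤ dist ξ x}, ‖ξ - x‖ ^ s
      = (N : ℝ) * (volume (ball (0 : EuclideanSpace ℝ (Fin N)) 1)).toReal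
          * (R ^ ((N : ℝ) + s) / (-((N : ℝ) + s))) := by
  haveI : Nonempty (Fin N) := Fin.pos_iff_nonempty.mp hN
  have hfin : Module.finrank ℝ (EuclideanSpace ℝ (Fin N)) = N := finrank_euclideanSpace_fin
  set f : ℝ → ℝ := (Ici R).indicator (fun r => r ^ s) with hf
  have hSmeas : MeasurableSet {ξ : EuclideanSpace ℝ (Fin N) | R ≤ dist ξ x} :=
    (isClosed_le continuous_const (continuous_id.dist continuous_const)).measurableSet
  have step1 : ∫ ξ in {ξ : EuclideanSpace ℝ (Fin N) | R ≤ dist ξ x}, ‖ξ - x‖ ^ s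
      = ∫ ξ : EuclideanSpace ℝ (Fin N), f ‖ξ - x‖ := by
    rw [← integral_indicator hSmeas]
    apply integral_congr_ae
    filter_upwards with ξ
    simp [hf, Set.indicator_apply, mem_Ici, mem_setOf_eq, dist_eq_norm]
  have step2 : ∫ ξ : EuclideanSpace ℝ (Fin N), f ‖ξ - x‖
      = ∫ ξ : EuclideanSpace ℝ (Fin N), f ‖ξ‖ :=
    integral_sub_right_eq_self (fun ξ : EuclideanSpace ℝ (Fin N) => f ‖ξ‖) x
  have step3 := integral_fun_norm_addHaar (volume : Measure (EuclideanSpace ℝ (Fin N))) f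
  rw [hfin] at step3
  have step4 : ∫ r in Ioi (0:ℝ), r ^ (N - 1) • f r = ∫ r in Ioi R, r ^ ((N : ℝ) - 1 + s) := by
    have : ∀ r : ℝ, r ^ (N - 1) • f r = (Ici R).indicator (fun r => r ^ (N - 1) * r ^ s) r := by
      intro r
      by_cases h : r ∈ Ici R
      · rw [hf, indicator_of_mem h, indicator_of_mem h, smul_eq_mul]
      · rw [hf, indicator_of_notMem h, indicator_of_notMem h, smul_zero]
    rw [setIntegral_congr_fun measurableSet_Ioi (fun r _ => this r),
      setIntegral_indicator measurableSet_Ici]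
    show ∫ r in Ioi (0:ℝ) ∩ Ici R, r ^ (N - 1) * r ^ s = _
    have hIci : Ioi (0:ℝ) ∩ Ici R = Ici R :=
      inter_eq_self_of_subset_right (fun r hr => lt_of_lt_of_le hR hr)
    rw [hIci, integral_Ici_eq_integral_Ioi]
    refine setIntegral_congr_fun measurableSet_Ioi (fun r hr => ?_)
    have hr0 : 0 < r := lt_trans hR hr
    rw [← Real.rpow_natCast r (N - 1), ← Real.rpow_add hr0]
    congr 1
    rw [Nat.cast_sub hN, Nat.cast_one]
  have step5 : ∫ r in Ioi R, r ^ ((N : ℝ) - 1 + s) =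
      -R ^ ((N : ℝ) - 1 + s + 1) / ((N : ℝ) - 1 + s + 1) :=
    integral_Ioi_rpow_of_lt (by linarith) hR
  rw [step1, step2, step3, step4, step5]
  have : (N : ℝ) - 1 + s + 1 = (N : ℝ) + s := by ring
  rw [this, nsmul_eq_mul, smul_eq_mul,
    show R ^ ((N:ℝ) + s) / (-((N:ℝ) + s)) = -R ^ ((N:ℝ) + s) / ((N:ℝ) + s) by
      rw [div_neg, neg_div]]
  rw [measureReal_def]
  ring


theorem stmt1 (N : ℕ) (hN : 1 ≤ N) (σ : ℝ) (hσ : σ ∈ Set.Ioo (0:ℝ) 2) :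
    ∃ C > 0, ∀ (g : EuclideanSpace ℝ (Fin N) → ℝ), Measurable g →
      ∀ M : ℝ, (∀ ξ, |g ξ| ≤ M) →
      ∀ (x : EuclideanSpace ℝ (Fin N)) (R y : ℝ), 0 < R → 0 < y →
        IntegrableOn
          (fun ξ : EuclideanSpace ℝ (Fin N) =>
            (g ξ - g x) *
              ((dist x ξ ^ 2 + y ^ 2) ^ (-((N : ℝ) + σ) / 2)
                - dist x ξ ^ (-((N : ℝ) + σ))))
          {ξ : EuclideanSpace ℝ (Fin N) | R ≤ dist ξ x} volume
        ∧ |∫ ξ in {ξ : EuclideanSpace ℝ (Fin N) | R ≤ dist ξ x},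
            (g ξ - g x) *
              ((dist x ξ ^ 2 + y ^ 2) ^ (-((N : ℝ) + σ) / 2)
                - dist x ξ ^ (-((N : ℝ) + σ)))|
          ≤ C * M * y ^ 2 / R ^ (σ + 2) := by
  obtain ⟨hσ0, hσ2⟩ := hσ
  haveI : Nonempty (Fin N) := Fin.pos_iff_nonempty.mp hN
  have hfin : Module.finrank ℝ (EuclideanSpace ℝ (Fin N)) = N := finrank_euclideanSpace_fin
  have hN0 : (0:ℝ) < N := by exact_mod_cast hN
  have hvol : 0 < (volume (ball (0 : EuclideanSpace ℝ (Fin N)) 1)).toReal :=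
    ENNReal.toReal_pos (measure_ball_pos _ _ one_pos).ne' measure_ball_lt_top.ne
  set V := (volume (ball (0 : EuclideanSpace ℝ (Fin N)) 1)).toReal with hV
  have hp : (0:ℝ) < (N:ℝ) + σ := by linarith
  have hσ2' : (0:ℝ) < σ + 2 := by linarith
  refine ⟨((N:ℝ) + σ) * ((N:ℝ) * V) / (σ + 2),
    div_pos (mul_pos hp (mul_pos hN0 hvol)) hσ2', ?_⟩
  intro g hg M hM x R y hR hy
  have hM0 : 0 ≤ M := le_trans (abs_nonneg _) (hM x)
  set S := {ξ : EuclideanSpace ℝ (Fin N) | R ≤ dist ξ x} with hS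
  have hSmeas : MeasurableSet S :=
    (isClosed_le continuous_const (continuous_id.dist continuous_const)).measurableSet
  set φ : EuclideanSpace ℝ (Fin N) → ℝ := fun ξ =>
    (g ξ - g x) *
      ((dist x ξ ^ 2 + y ^ 2) ^ (-((N : ℝ) + σ) / 2) - dist x ξ ^ (-((N : ℝ) + σ))) with hφ
  set c₀ : ℝ := 2 * M * (((N:ℝ) + σ) / 2 * y ^ 2) with hc₀
  have hc₀0 : 0 ≤ c₀ := by positivity
  set D : EuclideanSpace ℝ (Fin N) → ℝ :=
    fun ξ => c₀ * ‖ξ - x‖ ^ (-((N:ℝ) + σ + 2)) with hD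
  -- pointwise bound on S
  have hbnd : ∀ ξ ∈ S, ‖φ ξ‖ ≤ D ξ := by
    intro ξ hξ
    have htR : R ≤ dist x ξ := by rw [dist_comm]; exact hξ
    have hd : 0 < dist x ξ := lt_of_lt_of_le hR htR
    have hA := keyA (p := (N:ℝ) + σ) hp hd hy.le
    have hnorm : dist x ξ = ‖ξ - x‖ := by rw [dist_comm, dist_eq_norm]
    have h2M : |g ξ - g x| ≤ 2 * M := by
      have := hM ξ; have := hM x
      calc |g ξ - g x| ≤ |g ξ| + |g x| := abs_sub _ _
        _ ≤ 2 * M := by linarith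
    calc ‖φ ξ‖ = |g ξ - g x| *
        |(dist x ξ ^ 2 + y ^ 2) ^ (-((N : ℝ) + σ) / 2) - dist x ξ ^ (-((N : ℝ) + σ))| := by
          rw [hφ, Real.norm_eq_abs, abs_mul]
      _ ≤ 2 * M * (((N:ℝ) + σ) / 2 * y ^ 2 * dist x ξ ^ (-((N:ℝ) + σ + 2))) := by
          apply mul_le_mul h2M hA (abs_nonneg _) (by linarith)
      _ = D ξ := by rw [hD, hc₀, hnorm]; ring
  -- integrability of the dominating function on S
  have hDmeas : Measurable (fun ξ : EuclideanSpace ℝ (Fin N) => ‖ξ - x‖ ^ (-((N:ℝ) + σ + 2))) := by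
    fun_prop
  have hgt : (Module.finrank ℝ (EuclideanSpace ℝ (Fin N)) : ℝ) < (N:ℝ) + σ + 2 := by
    rw [hfin]; linarith
  have hG : Integrable (fun ξ : EuclideanSpace ℝ (Fin N) =>
      (1 + ‖ξ - x‖) ^ (-((N:ℝ) + σ + 2))) volume :=
    (integrable_one_add_norm hgt).comp_sub_right x
  have hdom : ∀ ξ ∈ S, ‖ξ - x‖ ^ (-((N:ℝ) + σ + 2))
      ≤ (1 + 1/R) ^ ((N:ℝ) + σ + 2) * (1 + ‖ξ - x‖) ^ (-((N:ℝ) + σ + 2)) := by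
    intro ξ hξ
    set t : ℝ := ‖ξ - x‖ with ht
    have htR : R ≤ t := by rw [ht, ← dist_eq_norm]; exact hξ
    have ht0 : 0 < t := lt_of_lt_of_le hR htR
    have hc : (0:ℝ) < 1 + 1/R := by positivity
    have h2 : 1 ≤ t * R⁻¹ := by
      rw [← div_eq_mul_inv]; exact (one_le_div hR).2 htR
    have h1 : (1 + t) / (1 + 1/R) ≤ t := by
      rw [div_le_iff₀ hc, one_div]; nlinarith
    have h3 : t ^ (-((N:ℝ) + σ + 2)) ≤ ((1 + t) / (1 + 1/R)) ^ (-((N:ℝ) + σ + 2)) :=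
      Real.rpow_le_rpow_of_nonpos (by positivity) h1 (by linarith)
    have h4 : ((1 + t) / (1 + 1/R)) ^ (-((N:ℝ) + σ + 2))
        = (1 + 1/R) ^ ((N:ℝ) + σ + 2) * (1 + t) ^ (-((N:ℝ) + σ + 2)) := by
      rw [Real.div_rpow (by positivity) hc.le, Real.rpow_neg hc.le, div_eq_mul_inv, inv_inv, mul_comm]
    rw [h4] at h3
    exact h3
  have hdom_int : IntegrableOn
      (fun ξ : EuclideanSpace ℝ (Fin N) => ‖ξ - x‖ ^ (-((N:ℝ) + σ + 2))) S volume := by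
    refine Integrable.mono ((hG.const_mul ((1 + 1/R) ^ ((N:ℝ) + σ + 2))).integrableOn)
      hDmeas.aestronglyMeasurable.restrict ?_
    rw [ae_restrict_iff' hSmeas]
    filter_upwards with ξ hξ
    rw [Real.norm_eq_abs, Real.norm_eq_abs,
      abs_of_nonneg (Real.rpow_nonneg (norm_nonneg _) _),
      abs_of_nonneg (by positivity)]
    exact hdom ξ hξ
  have hDint : IntegrableOn D S volume := hdom_int.const_mul c₀
  -- measurability of φ
  have hφmeas : Measurable φ := by
    rw [hφ]
    apply (hg.sub measurable_const).mul
    fun_prop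
  have hφint : IntegrableOn φ S volume := by
    refine Integrable.mono hDint hφmeas.aestronglyMeasurable.restrict ?_
    rw [ae_restrict_iff' hSmeas]
    filter_upwards with ξ hξ
    exact (hbnd ξ hξ).trans (le_abs_self _)
  refine ⟨hφint, ?_⟩
  have hBval := keyB N hN x (s := -((N:ℝ) + σ + 2)) hR (by linarith)
  have hexp : (N:ℝ) + -((N:ℝ) + σ + 2) = -(σ + 2) := by ring
  rw [hexp] at hBval
  rw [← hS] at hBval
  calc |∫ ξ in S, φ ξ| ≤ ∫ ξ in S, ‖φ ξ‖ := by
        rw [← Real.norm_eq_abs]; exact norm_integral_le_integral_norm _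
    _ ≤ ∫ ξ in S, D ξ := by
        refine setIntegral_mono_on hφint.norm hDint hSmeas ?_
        intro ξ hξ
        exact hbnd ξ hξ
    _ = c₀ * ∫ ξ in S, ‖ξ - x‖ ^ (-((N:ℝ) + σ + 2)) := by
        rw [hD, integral_const_mul]
    _ = c₀ * ((N:ℝ) * V * (R ^ (-(σ + 2)) / (-(-(σ + 2))))) := by rw [hBval]
    _ = ((N:ℝ) + σ) * ((N:ℝ) * V) / (σ + 2) * M * y ^ 2 / R ^ (σ + 2) := by
        rw [Real.rpow_neg hR.le, hc₀]
        have hRp : (0:ℝ) < R ^ (σ + 2) := Real.rpow_pos_of_pos hR _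
        field_simp
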